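/- Let w be a word, k with k+1 ≤ min over letters a of |w|_a (so every letter occurs at least k+1 times in w), and ℓ ∈ ℕ. If JScatFact_k(w, ℓ) = Σ^k (every word of length k is a jumbled scattered factor of w with ℓ jumbles), then JScatFact_{k+1}(w, ℓ+1) = Σ^{k+1}. -/

import Mathlib

open List

variable {α : Type*}

/-- Parikh vector comparison: `u` has at most as many occurrences of each letter as `w`. -/
def ParikhLE [DecidableEq α] (u w : List α) : Prop :=
  ∀ a : α, u.count a ≤ w.count a

/-- `u` is a jumbled scattered factor of `w` with `ℓ` jumbles. -/
def JSF [DecidableEq α] (w : List α) (ℓ : ℕ) (u : List α) : Prop :=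
  ParikhLE u w ∧ ∃ v : List α, v.Sublist u ∧ v.Sublist w ∧ v.length + ℓ = u.length

/-- The jumble index `δ_w(u)`: minimal number of jumbles. -/
noncomputable def jumbleIndex [DecidableEq α] (w u : List α) : ℕ :=
  sInf {ℓ : ℕ | JSF w ℓ u}

/-- Length of a longest common scattered factor (subsequence) of `u` and `w`. -/
noncomputable def lcsf (u w : List α) : ℕ :=
  sSup {n : ℕ | ∃ v : List α, v.Sublist u ∧ v.Sublist w ∧ v.length = n}

/-- Length-`k` jumbled scattered factors of `w` with `ℓ` jumbles. -/
def JScatFactK [DecidableEq α] (k : ℕ) (w : List α) (ℓ : ℕ) : Set (List α) :=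
  {u | u.length = k ∧ JSF w ℓ u}

/-- Jumbled scattered factors of `w` of length at most `k` with `ℓ` jumbles. -/
def JScatFactLe [DecidableEq α] (k : ℕ) (w : List α) (ℓ : ℕ) : Set (List α) :=
  {u | u.length ≤ k ∧ JSF w ℓ u}

/-- Universality index `ι(w)`: largest `k` with `Σ^k ⊆ ScatFact(w)`. -/
noncomputable def univIndex (α : Type*) [Fintype α] (w : List α) : ℕ :=
  sSup {k : ℕ | ∀ u : List α, u.length = k → u.Sublist w}

/-- Minimal number of occurrences of a letter in `w`. -/
noncomputable def minCount (α : Type*) [Fintype α] [DecidableEq α] [Nonempty α]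
    (w : List α) : ℕ :=
  Finset.univ.inf' Finset.univ_nonempty (fun a : α => w.count a)

theorem stmt14 [Fintype α] [DecidableEq α] (w : List α) (k ℓ : ℕ)
    (hcount : ∀ a : α, k + 1 ≤ w.count a)
    (h : JScatFactK k w ℓ = {u : List α | u.length = k}) :
    JScatFactK (k + 1) w (ℓ + 1) = {u : List α | u.length = k + 1} := by
  ext u
  constructor
  · rintro ⟨hlen, -⟩; exact hlen
  · intro hu
    replace hu : u.length = k + 1 := hu
    refine ⟨hu, fun a => ?_, ?_⟩
    · exact le_trans (u.count_le_length : u.count a ≤ u.length) (hu ▸ hcount a)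
    · have hne : u ≠ [] := by intro h'; simp [h'] at hu
      have hlen' : u.dropLast.length = k := by
        rw [List.length_dropLast, hu]; rfl
      have hmem : u.dropLast ∈ JScatFactK k w ℓ := by rw [h]; exact hlen'
      obtain ⟨-, -, v, hv1, hv2, hv3⟩ := hmem
      rw [hlen'] at hv3
      exact ⟨v, hv1.trans (List.dropLast_sublist u), hv2, by omega⟩
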